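/- Let G be a finite group and x, y ∈ G noncommuting elements with x a p-element, y a q-element, p ≠ q, and gcd(|x^G|, |y^G|) = 1. Then p divides |y^G| and q divides |x^G|. -/

import Mathlib

def classSet {G : Type*} [Group G] (x : G) : Set G := {y | IsConj x y}

noncomputable def classSize {G : Type*} [Group G] (x : G) : ℕ := Nat.card (classSet x)

open Subgroup

lemma classSize_eq_index {G : Type*} [Group G] (x : G) :
    classSize x = (Subgroup.centralizer {x}).index := by
  have h1 : classSet x = MulAction.orbit (ConjAct G) x := by
    ext h
    simp only [classSet, Set.mem_setOf_eq, ConjAct.mem_orbit_conjAct]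
    exact isConj_comm
  rw [classSize, h1, Nat.card_coe_set_eq, ← MulAction.index_stabilizer,
    Subgroup.centralizer_eq_comap_stabilizer]
  exact (Subgroup.index_comap_of_surjective _ (f := (ConjAct.toConjAct (G := G)).toMonoidHom) (ConjAct.toConjAct (G := G)).surjective).symm

lemma exists_mul_decomp {G : Type*} [Group G] [Finite G] {H K : Subgroup G}
    (hco : Nat.Coprime H.index K.index) (g : G) :
    ∃ b ∈ K, ∃ a ∈ H, g = b * a := by
  have hK0 : K.index ≠ 0 := Subgroup.index_ne_zero_of_finite
  have h1 : H.relIndex K * K.index = (H ⊓ K).index := by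
    rw [← Subgroup.inf_relIndex_right]
    exact Subgroup.relIndex_mul_index inf_le_right
  have hle : H.relIndex K ≤ H.index := by
    have h2 : (H ⊓ K).index ≤ H.index * K.index := Subgroup.index_inf_le (H := H) (K := K)
    rw [← h1] at h2
    exact Nat.le_of_mul_le_mul_right h2 (Nat.pos_of_ne_zero hK0)
  have hdvd : H.index ∣ H.relIndex K := by
    have h3 : H.index ∣ H.relIndex K * K.index := by
      rw [h1]; exact Subgroup.index_dvd_of_le inf_le_left
    exact (Nat.Coprime.dvd_of_dvd_mul_right hco h3)
  have hrne : H.relIndex K ≠ 0 := Subgroup.index_ne_zero_of_finite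
  have heq : H.relIndex K = H.index :=
    Nat.le_antisymm hle (Nat.le_of_dvd (Nat.pos_of_ne_zero hrne) hdvd)
  -- the natural map K ⧸ H.subgroupOf K → G ⧸ H
  let f : K ⧸ H.subgroupOf K → G ⧸ H :=
    Quotient.map' Subtype.val (fun a b hab => by
      rw [QuotientGroup.leftRel_apply] at hab ⊢
      simpa [Subgroup.mem_subgroupOf] using hab)
  have hfmk : ∀ k : K, f (QuotientGroup.mk k) = QuotientGroup.mk (k : G) := fun k => rfl
  have hinj : Function.Injective f := by
    intro q1 q2 hq
    induction q1 using QuotientGroup.induction_on with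
    | H k1 =>
    induction q2 using QuotientGroup.induction_on with
    | H k2 =>
    rw [hfmk, hfmk, QuotientGroup.eq] at hq
    rw [QuotientGroup.eq]
    exact Subgroup.mem_subgroupOf.mpr (by simpa using hq)
  have hcard : Nat.card (K ⧸ H.subgroupOf K) = Nat.card (G ⧸ H) := heq
  have hbij : Function.Bijective f :=
    (Nat.bijective_iff_injective_and_card f).mpr ⟨hinj, hcard⟩
  obtain ⟨q, hq⟩ := hbij.2 (g : G ⧸ H)
  induction q using QuotientGroup.induction_on with
  | H k =>
  rw [hfmk, QuotientGroup.eq] at hq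
  exact ⟨k, k.2, (k : G)⁻¹ * g, hq, by group⟩

lemma key_dvd {G : Type*} [Group G] [Finite G] {p : ℕ} (hp : p.Prime) {x y : G}
    (hnc : ¬ Commute x y) (hx : ∃ a : ℕ, orderOf x = p ^ a)
    (hco : Nat.Coprime (Subgroup.centralizer {x}).index (Subgroup.centralizer {y}).index) :
    p ∣ (Subgroup.centralizer {y}).index := by
  by_contra hnd
  haveI : Fact p.Prime := ⟨hp⟩
  set K := Subgroup.centralizer ({y} : Set G) with hKdef
  -- x lies in some Sylow p-subgroup Q of G
  obtain ⟨a, ha⟩ := hx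
  have hpg : IsPGroup p (Subgroup.zpowers x) :=
    IsPGroup.of_card (by rw [Nat.card_zpowers, ha])
  obtain ⟨Q, hQ⟩ := hpg.exists_le_sylow
  have hxQ : x ∈ (Q : Subgroup G) := hQ (Subgroup.mem_zpowers x)
  -- a Sylow p-subgroup of K is Sylow in G
  obtain ⟨P⟩ : Nonempty (Sylow p K) := inferInstance
  have hPle : ((P : Subgroup K).map K.subtype) ≤ K := Subgroup.map_subtype_le _
  obtain ⟨Q', hQ'⟩ := (P.isPGroup'.map K.subtype).exists_le_sylow
  have hGpos : Nat.card G ≠ 0 := Nat.card_pos.ne'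
  have hKpos : Nat.card K ≠ 0 := Nat.card_pos.ne'
  have hfact : (Nat.card K).factorization p = (Nat.card G).factorization p := by
    rw [← K.card_mul_index, Nat.factorization_mul hKpos Subgroup.index_ne_zero_of_finite,
      Finsupp.add_apply, Nat.factorization_eq_zero_of_not_dvd hnd, add_zero]
  have hcards : Nat.card ((P : Subgroup K).map K.subtype) = Nat.card (Q' : Subgroup G) := by
    have h1 : Nat.card ((P : Subgroup K).map K.subtype) = Nat.card (P : Subgroup K) :=
      (Nat.card_congr ((P : Subgroup K).equivMapOfInjective K.subtype
        K.subtype_injective).toEquiv).symm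
    rw [h1, Sylow.card_eq_multiplicity, Sylow.card_eq_multiplicity, hfact]
  have hQ'eq : ((P : Subgroup K).map K.subtype) = (Q' : Subgroup G) :=
    Subgroup.eq_of_le_of_card_ge hQ' hcards.ge
  have hQ'K : (Q' : Subgroup G) ≤ K := hQ'eq ▸ hPle
  -- conjugate Q to Q'
  obtain ⟨g, hg⟩ := MulAction.exists_smul_eq G Q Q'
  have hz : g * x * g⁻¹ ∈ (Q' : Subgroup G) := by
    rw [← hg, Sylow.coe_subgroup_smul]
    exact ⟨x, hxQ, rfl⟩
  have hzy : y * (g * x * g⁻¹) = (g * x * g⁻¹) * y :=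
    (Subgroup.mem_centralizer_iff.mp (hQ'K hz)) y rfl
  -- decompose g = b * a with b ∈ C(y), a ∈ C(x)
  obtain ⟨b, hb, a', ha', rfl⟩ := exists_mul_decomp hco g
  have hax : x * a' = a' * x := (Subgroup.mem_centralizer_iff.mp ha') x rfl
  have hby : y * b = b * y := (Subgroup.mem_centralizer_iff.mp hb) y rfl
  apply hnc
  have hconj : b * a' * x * (b * a')⁻¹ = b * x * b⁻¹ := by
    rw [mul_inv_rev, show b * a' * x * (a'⁻¹ * b⁻¹) = b * (a' * x * a'⁻¹) * b⁻¹ by group,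
      ← hax]
    group
  rw [hconj] at hzy
  have hyb : b * y * b⁻¹ = y := by rw [← hby]; group
  have : Commute (b * x * b⁻¹) (b * y * b⁻¹) := by
    rw [hyb]
    exact hzy.symm
  exact (Commute.conj_iff b).mp this

theorem stmt4 {G : Type*} [Group G] [Finite G] (p q : ℕ) (hp : p.Prime) (hq : q.Prime)
    (hpq : p ≠ q) (x y : G) (hnc : ¬ Commute x y)
    (hx : ∃ a : ℕ, orderOf x = p ^ a) (hy : ∃ b : ℕ, orderOf y = q ^ b)
    (h : Nat.Coprime (classSize x) (classSize y)) :
    p ∣ classSize y ∧ q ∣ classSize x := by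
  rw [classSize_eq_index, classSize_eq_index] at h ⊢
  exact ⟨key_dvd hp hnc hx h, key_dvd hq (fun c => hnc c.symm) hy h.symm⟩
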